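/- Every strongly irreducible generalized permutation admits a strict pseudo-suspension. -/

import Mathlib

open Finset

/-- A generalized permutation of type `(l, m)`: a map from positions `1, …, l + m`
(the top line being positions `1, …, l` and the bottom line positions `l+1, …, l+m`)
to an alphabet `A`, such that every letter has exactly two preimages. -/
structure GenPerm (A : Type*) [DecidableEq A] where
  l : ℕ
  m : ℕ
  p : ℕ → A
  double : ∀ a : A, ((Finset.Icc 1 (l + m)).filter (fun i => p i = a)).card = 2

namespace GenPerm

variable {A : Type*} [DecidableEq A]

/-- Total number of positions, `l + m = 2d`. -/
def size (π : GenPerm A) : ℕ := π.l + π.m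

/-- The multiset of letters occupying positions `a, a+1, …, b`. -/
def seg (π : GenPerm A) (a b : ℕ) : Multiset A :=
  (Finset.Icc a b).val.map π.p

/-- `i` and `j` are the two positions of a common letter (i.e. `j = σ(i)` where `σ` is the
fixed-point-free involution associated to `π`). -/
def IsTwin (π : GenPerm A) (i j : ℕ) : Prop :=
  1 ≤ i ∧ i ≤ π.size ∧ 1 ≤ j ∧ j ≤ π.size ∧ i ≠ j ∧ π.p i = π.p j

/-- The convention: some letter has both occurrences on the top line, and some letter has
both occurrences on the bottom line. -/
def Convention (π : GenPerm A) : Prop :=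
  (∃ i j, π.IsTwin i j ∧ i ≤ π.l ∧ j ≤ π.l) ∧
  (∃ i j, π.IsTwin i j ∧ π.l < i ∧ π.l < j)

/-- `π` is reducible: it admits a decomposition with corners `A∪B`, `D∪B`, `A∪C`, `D∪C`
(for disjoint, not all empty, subsets `A,B,C,D` of the alphabet) such that (i) no corner is
empty, or (ii) exactly one corner is empty and it is a left one, or (iii) exactly two corners
are empty and they are both left or both right. -/
def Reducible (π : GenPerm A) : Prop :=
  ∃ (As Bs Cs Ds : Finset A) (i1 i2 i3 i4 : ℕ),
    Disjoint As Bs ∧ Disjoint As Cs ∧ Disjoint As Ds ∧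
    Disjoint Bs Cs ∧ Disjoint Bs Ds ∧ Disjoint Cs Ds ∧
    ¬(As = ∅ ∧ Bs = ∅ ∧ Cs = ∅ ∧ Ds = ∅) ∧
    i1 ≤ i2 ∧ i2 ≤ π.l ∧ π.l ≤ i3 ∧ i3 ≤ i4 ∧ i4 ≤ π.size ∧
    π.seg 1 i1 = As.val + Bs.val ∧
    π.seg (i2 + 1) π.l = Ds.val + Bs.val ∧
    π.seg (π.l + 1) i3 = As.val + Cs.val ∧
    π.seg (i4 + 1) π.size = Ds.val + Cs.val ∧
    ((π.seg 1 i1 ≠ 0 ∧ π.seg (i2 + 1) π.l ≠ 0 ∧ π.seg (π.l + 1) i3 ≠ 0 ∧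
        π.seg (i4 + 1) π.size ≠ 0) ∨
     (π.seg 1 i1 = 0 ∧ π.seg (i2 + 1) π.l ≠ 0 ∧ π.seg (π.l + 1) i3 ≠ 0 ∧
        π.seg (i4 + 1) π.size ≠ 0) ∨
     (π.seg 1 i1 ≠ 0 ∧ π.seg (i2 + 1) π.l ≠ 0 ∧ π.seg (π.l + 1) i3 = 0 ∧
        π.seg (i4 + 1) π.size ≠ 0) ∨
     (π.seg 1 i1 = 0 ∧ π.seg (i2 + 1) π.l ≠ 0 ∧ π.seg (π.l + 1) i3 = 0 ∧
        π.seg (i4 + 1) π.size ≠ 0) ∨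
     (π.seg 1 i1 ≠ 0 ∧ π.seg (i2 + 1) π.l = 0 ∧ π.seg (π.l + 1) i3 ≠ 0 ∧
        π.seg (i4 + 1) π.size = 0))

/-- `π` is irreducible if it is not reducible. -/
def Irreducible (π : GenPerm A) : Prop := ¬ π.Reducible

/-- `π` is strongly irreducible if every decomposition with corners `A∪B`, `D∪B`, `A∪C`,
`D∪C` (for disjoint subsets) has all four corners empty. -/
def StronglyIrreducible (π : GenPerm A) : Prop :=
  ∀ (As Bs Cs Ds : Finset A) (i1 i2 i3 i4 : ℕ),
    Disjoint As Bs → Disjoint As Cs → Disjoint As Ds →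
    Disjoint Bs Cs → Disjoint Bs Ds → Disjoint Cs Ds →
    i1 ≤ i2 → i2 ≤ π.l → π.l ≤ i3 → i3 ≤ i4 → i4 ≤ π.size →
    π.seg 1 i1 = As.val + Bs.val →
    π.seg (i2 + 1) π.l = Ds.val + Bs.val →
    π.seg (π.l + 1) i3 = As.val + Cs.val →
    π.seg (i4 + 1) π.size = Ds.val + Cs.val →
    (π.seg 1 i1 = 0 ∧ π.seg (i2 + 1) π.l = 0 ∧ π.seg (π.l + 1) i3 = 0 ∧
      π.seg (i4 + 1) π.size = 0)

/-- `Σ_{j=1}^{k} ζ_{π(j)}` (partial sum along the top line). -/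
noncomputable def topSum (π : GenPerm A) (ζ : A → ℂ) (k : ℕ) : ℂ := ∑ j ∈ Finset.Icc 1 k, ζ (π.p j)

/-- `Σ_{j=1}^{k} ζ_{π(l+j)}` (partial sum along the bottom line). -/
noncomputable def botSum (π : GenPerm A) (ζ : A → ℂ) (k : ℕ) : ℂ := ∑ j ∈ Finset.Icc 1 k, ζ (π.p (π.l + j))

/-- Real version of `topSum`. -/
noncomputable def topSumR (π : GenPerm A) (τ : A → ℝ) (k : ℕ) : ℝ := ∑ j ∈ Finset.Icc 1 k, τ (π.p j)

/-- Real version of `botSum`. -/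
noncomputable def botSumR (π : GenPerm A) (τ : A → ℝ) (k : ℕ) : ℝ := ∑ j ∈ Finset.Icc 1 k, τ (π.p (π.l + j))

/-- `ζ` is a suspension data for `π`. -/
def IsSuspension (π : GenPerm A) (ζ : A → ℂ) : Prop :=
  (∀ a, 0 < (ζ a).re) ∧
  (∀ i, 1 ≤ i → i ≤ π.l - 1 → 0 < (π.topSum ζ i).im) ∧
  (∀ i, 1 ≤ i → i ≤ π.m - 1 → (π.botSum ζ i).im < 0) ∧
  π.topSum ζ π.l = π.botSum ζ π.m

/-- `τ` is a pseudo-suspension for `π`. -/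
def IsPseudoSusp (π : GenPerm A) (τ : A → ℝ) : Prop :=
  (∀ k, 1 ≤ k → k ≤ π.l → 0 ≤ π.topSumR τ k) ∧
  (∀ k, 1 ≤ k → k ≤ π.m → π.botSumR τ k ≤ 0) ∧
  π.topSumR τ π.l = 0 ∧ π.botSumR τ π.m = 0

/-- `τ` is a strict pseudo-suspension for `π`: all the inequalities are strict except the
extremal ones. -/
def IsStrictPseudoSusp (π : GenPerm A) (τ : A → ℝ) : Prop :=
  π.IsPseudoSusp τ ∧
  (∀ k, 1 ≤ k → k ≤ π.l - 1 → 0 < π.topSumR τ k) ∧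
  (∀ k, 1 ≤ k → k ≤ π.m - 1 → π.botSumR τ k < 0)

/-- Number of occurrences of the letter `a` on the top line; so `a ∈ 𝒜₀ ↔ topCount = 2`,
`a ∈ 𝒜₁ ↔ topCount = 0`, and `a ∈ 𝒜₀₁ ↔ topCount = 1`. -/
def topCount (π : GenPerm A) (a : A) : ℕ :=
  ((Finset.Icc 1 π.l).filter (fun i => π.p i = a)).card

end GenPerm

namespace GPAux


variable {n : Type*} [Fintype n]

/-- Euclidean pairing on `n → ℝ`. -/
def dot (v w : n → ℝ) : ℝ := ∑ a, v a * w a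

lemma dot_smul_left (c : ℝ) (v x : n → ℝ) : dot (c • v) x = c * dot v x := by
  simp [dot, Finset.mul_sum, mul_assoc]

lemma dot_sub_left (u v x : n → ℝ) : dot (u - v) x = dot u x - dot v x := by
  simp [dot, sub_mul, Finset.sum_sub_distrib]

lemma dot_add_left (u v x : n → ℝ) : dot (u + v) x = dot u x + dot v x := by
  simp [dot, add_mul, Finset.sum_add_distrib]

lemma dot_neg_left (v x : n → ℝ) : dot (-v) x = - dot v x := by
  simp [dot]

lemma dot_sub_right (u x y : n → ℝ) : dot u (x - y) = dot u x - dot u y := by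
  simp [dot, mul_sub, Finset.sum_sub_distrib]

lemma dot_smul_right (c : ℝ) (u x : n → ℝ) : dot u (c • x) = c * dot u x := by
  simp only [dot, Finset.mul_sum, Pi.smul_apply, smul_eq_mul]
  exact Finset.sum_congr rfl fun i _ => by ring

lemma dot_neg_right (u x : n → ℝ) : dot u (-x) = - dot u x := by
  simp [dot]

lemma dot_sum_left {ι : Type*} (S : Finset ι) (f : ι → n → ℝ) (x : n → ℝ) :
    dot (∑ i ∈ S, f i) x = ∑ i ∈ S, dot (f i) x := by
  simp [dot, Finset.sum_mul]
  exact Finset.sum_comm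

lemma eq_zero_of_dot_self_nonpos {w : n → ℝ} (h : dot w w ≤ 0) : w = 0 := by
  have h0 : ∀ b ∈ (univ : Finset n), 0 ≤ w b * w b := fun b _ => mul_self_nonneg _
  have h1 : (0:ℝ) ≤ dot w w := Finset.sum_nonneg h0
  have hz : dot w w = 0 := le_antisymm h h1
  funext a
  have := (Finset.sum_eq_zero_iff_of_nonneg h0).1 hz a (mem_univ a)
  simpa [mul_self_eq_zero] using this

theorem farkas {ι : Type*} [DecidableEq ι] (S : Finset ι) :
    ∀ (v : ι → n → ℝ) (w : n → ℝ),
      (∀ x : n → ℝ, (∀ i ∈ S, 0 ≤ dot (v i) x) → 0 ≤ dot w x) →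
      ∃ c : ι → ℝ, (∀ i, 0 ≤ c i) ∧ w = ∑ i ∈ S, c i • v i := by
  induction S using Finset.induction_on with
  | empty =>
    intro v w h
    refine ⟨fun _ => 0, fun _ => le_refl _, ?_⟩
    have h1 := h (-w) (by simp)
    rw [dot_neg_right] at h1
    have := eq_zero_of_dot_self_nonpos (by linarith)
    simp [this]
  | @insert a S ha ih =>
    intro v w h
    by_cases hcase : ∀ x : n → ℝ, (∀ i ∈ S, 0 ≤ dot (v i) x) → 0 ≤ dot w x
    · obtain ⟨c, hc, hw⟩ := ih v w hcase
      refine ⟨Function.update c a 0, fun i => ?_, ?_⟩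
      · rcases eq_or_ne i a with rfl | hi
        · simp
        · simp [Function.update_of_ne hi]; exact hc i
      · rw [Finset.sum_insert ha]
        simp only [Function.update_self, zero_smul, zero_add]
        rw [hw]
        exact Finset.sum_congr rfl fun i hi => by
          rw [Function.update_of_ne (by rintro rfl; exact ha hi)]
    · push_neg at hcase
      obtain ⟨x0, hS0, hw0⟩ := hcase
      have hva : dot (v a) x0 < 0 := by
        by_contra hge
        push_neg at hge
        exact absurd (h x0 (fun i hi => by
          rcases Finset.mem_insert.1 hi with rfl | hi
          · exact hge
          · exact hS0 i hi)) (not_le.2 hw0)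
      have hD : dot (v a) x0 ≠ 0 := ne_of_lt hva
      set δ : (n → ℝ) → ℝ := fun u => dot u x0 / dot (v a) x0 with hδ
      have key : ∀ u x : n → ℝ,
          dot (u - δ u • v a) x = dot u (x - (dot (v a) x / dot (v a) x0) • x0) := by
        intro u x
        rw [dot_sub_left, dot_smul_left, dot_sub_right, dot_smul_right, hδ]
        field_simp
      have hIH : ∀ x : n → ℝ, (∀ i ∈ S, 0 ≤ dot (v i - δ (v i) • v a) x) →
          0 ≤ dot (w - δ w • v a) x := by
        intro x hx
        rw [key]
        set x' := x - (dot (v a) x / dot (v a) x0) • x0 with hx'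
        refine h x' fun i hi => ?_
        rcases Finset.mem_insert.1 hi with rfl | hi
        · rw [hx', dot_sub_right, dot_smul_right]
          rw [div_mul_cancel₀ _ hD]
          simp
        · rw [← key]; exact hx i hi
      obtain ⟨c, hc, hc'⟩ := ih (fun i => v i - δ (v i) • v a) (w - δ w • v a) hIH
      set ca : ℝ := δ w - ∑ i ∈ S, c i * δ (v i) with hca
      have hsum : w = ca • v a + ∑ i ∈ S, c i • v i := by
        have : w - δ w • v a = ∑ i ∈ S, c i • (v i - δ (v i) • v a) := hc'
        rw [Finset.sum_congr rfl (fun i _ => smul_sub (c i) (v i) (δ (v i) • v a)),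
          Finset.sum_sub_distrib] at this
        have h2 : ∑ i ∈ S, c i • δ (v i) • v a = (∑ i ∈ S, c i * δ (v i)) • v a := by
          rw [Finset.sum_smul]
          exact Finset.sum_congr rfl fun i _ => by rw [smul_smul]
        rw [h2] at this
        have := sub_eq_sub_iff_sub_eq_sub.1 this
        rw [hca, sub_smul]
        linear_combination (norm := abel) this
      have hca0 : 0 ≤ ca := by
        have hdot : dot w x0 = ca * dot (v a) x0 + ∑ i ∈ S, c i * dot (v i) x0 := by
          rw [hsum, dot_add_left, dot_smul_left, dot_sum_left]
          congr 1
          exact Finset.sum_congr rfl fun i _ => dot_smul_left _ _ _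
        have hsum0 : 0 ≤ ∑ i ∈ S, c i * dot (v i) x0 :=
          Finset.sum_nonneg fun i hi => mul_nonneg (hc i) (hS0 i hi)
        nlinarith
      refine ⟨Function.update c a ca, fun i => ?_, ?_⟩
      · rcases eq_or_ne i a with rfl | hi
        · simpa using hca0
        · simp [Function.update_of_ne hi]; exact hc i
      · rw [Finset.sum_insert ha, hsum]
        simp only [Function.update_self]
        congr 1
        exact Finset.sum_congr rfl fun i hi => by
          rw [Function.update_of_ne (by rintro rfl; exact ha hi)]


open scoped Classical

variable {A : Type*} [DecidableEq A] (π : GenPerm A)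

/-- Top occurrences of a letter (positions in `[1, l]`). -/
def occT (a : A) : Finset ℕ := (Finset.Icc 1 π.l).filter (fun i => π.p i = a)

/-- Bottom occurrences of a letter, in shifted coordinates (`y ∈ [1, m]` for position `l+y`). -/
def occB (a : A) : Finset ℕ := (Finset.Icc 1 π.m).filter (fun i => π.p (π.l + i) = a)

lemma card_shift (l u v : ℕ) (q : ℕ → Prop) [DecidablePred q] :
    ((Finset.Icc (l+u) (l+v)).filter q).card = ((Finset.Icc u v).filter (fun y => q (l+y))).card := by
  refine Finset.card_bij' (fun x _ => x - l) (fun y _ => l + y) ?_ ?_ ?_ ?_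
  · intro x hx
    simp only [Finset.mem_filter, Finset.mem_Icc] at hx ⊢
    refine ⟨⟨by omega, by omega⟩, ?_⟩
    have : l + (x - l) = x := by omega
    rw [this]; exact hx.2
  · intro y hy
    simp only [Finset.mem_filter, Finset.mem_Icc] at hy ⊢
    exact ⟨⟨by omega, by omega⟩, hy.2⟩
  · intro x hx
    simp only [Finset.mem_filter, Finset.mem_Icc] at hx
    omega
  · intro y _; omega

lemma card_occ (a : A) : (occT π a).card + (occB π a).card = 2 := by
  have h := π.double a
  have hsplit : (Finset.Icc 1 (π.l + π.m)).filter (fun i => π.p i = a)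
      = occT π a ∪ (Finset.Icc (π.l + 1) (π.l + π.m)).filter (fun i => π.p i = a) := by
    rw [occT, ← Finset.filter_union]
    congr 1
    ext x
    simp only [Finset.mem_Icc, Finset.mem_union]
    omega
  have hdisj : Disjoint (occT π a) ((Finset.Icc (π.l + 1) (π.l + π.m)).filter (fun i => π.p i = a)) := by
    rw [Finset.disjoint_left]
    intro x hx hx'
    simp only [occT, Finset.mem_filter, Finset.mem_Icc] at hx hx'
    omega
  rw [hsplit, Finset.card_union_of_disjoint hdisj] at h
  rw [← h, occB]
  congr 1
  exact (card_shift π.l 1 π.m (fun i => π.p i = a)).symm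

lemma count_seg (a : A) (u v : ℕ) :
    Multiset.count a (π.seg u v) = ((Finset.Icc u v).filter (fun x => π.p x = a)).card := by
  rw [GenPerm.seg, Multiset.count_map]
  rw [← Finset.filter_val, ← Finset.card_def]
  congr 1
  exact Finset.filter_congr fun x _ => by rw [eq_comm]

lemma seg_eq_zero_iff (u v : ℕ) : π.seg u v = 0 ↔ v < u := by
  rw [GenPerm.seg, Multiset.map_eq_zero, Finset.val_eq_zero, Finset.Icc_eq_empty_iff]
  omega

/-- weight vector of the top-partial-sum functional `T_j`. -/
noncomputable def vT (j : ℕ) : A → ℝ := fun a => ((Finset.Icc 1 j).filter (fun i => π.p i = a)).card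

/-- weight vector of the bottom-partial-sum functional `B_j`. -/
noncomputable def vB (j : ℕ) : A → ℝ := fun a => ((Finset.Icc 1 j).filter (fun i => π.p (π.l + i) = a)).card

lemma sum_comp_eq [Fintype A] (s : Finset ℕ) (τ : A → ℝ) (f : ℕ → A) :
    ∑ x ∈ s, τ (f x) = ∑ a : A, ((s.filter (fun x => f x = a)).card : ℝ) * τ a := by
  rw [← Finset.sum_fiberwise s f (fun x => τ (f x))]
  refine Finset.sum_congr rfl fun a _ => ?_
  have h : ∀ x ∈ s.filter (fun x => f x = a), τ (f x) = τ a :=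
    fun x hx => congrArg τ (Finset.mem_filter.1 hx).2
  rw [Finset.sum_congr rfl h, Finset.sum_const, nsmul_eq_mul]

lemma topSumR_eq_dot [Fintype A] (τ : A → ℝ) (j : ℕ) : π.topSumR τ j = dot (vT π j) τ := by
  rw [GenPerm.topSumR, dot]
  exact sum_comp_eq _ τ π.p

lemma botSumR_eq_dot [Fintype A] (τ : A → ℝ) (j : ℕ) : π.botSumR τ j = dot (vB π j) τ := by
  rw [GenPerm.botSumR, dot]
  exact sum_comp_eq _ τ (fun i => π.p (π.l + i))

lemma vT_eq_sum (a : A) (j : ℕ) (hj : j ≤ π.l) :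
    vT π j a = ∑ x ∈ occT π a, (if x ≤ j then (1:ℝ) else 0) := by
  rw [Finset.sum_boole, vT]
  congr 2
  ext x
  simp only [occT, Finset.mem_filter, Finset.mem_Icc]
  constructor
  · rintro ⟨⟨h1, h2⟩, h3⟩; exact ⟨⟨⟨h1, by omega⟩, h3⟩, h2⟩
  · rintro ⟨⟨⟨h1, _⟩, h3⟩, h2⟩; exact ⟨⟨h1, h2⟩, h3⟩

lemma vB_eq_sum (a : A) (j : ℕ) (hj : j ≤ π.m) :
    vB π j a = ∑ y ∈ occB π a, (if y ≤ j then (1:ℝ) else 0) := by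
  rw [Finset.sum_boole, vB]
  congr 2
  ext x
  simp only [occB, Finset.mem_filter, Finset.mem_Icc]
  constructor
  · rintro ⟨⟨h1, h2⟩, h3⟩; exact ⟨⟨⟨h1, by omega⟩, h3⟩, h2⟩
  · rintro ⟨⟨⟨h1, _⟩, h3⟩, h2⟩; exact ⟨⟨h1, h2⟩, h3⟩

lemma vT_top (a : A) : vT π π.l a = ((occT π a).card : ℝ) := rfl

lemma vB_bot (a : A) : vB π π.m a = ((occB π a).card : ℝ) := rfl

lemma swap_top (a : A) (c : ℕ → ℝ) :
    ∑ j ∈ Finset.Icc 1 π.l, c j * vT π j a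
      = ∑ x ∈ occT π a, ∑ j ∈ Finset.Icc x π.l, c j := by
  have h1 : ∀ j ∈ Finset.Icc 1 π.l, c j * vT π j a
      = ∑ x ∈ occT π a, (if x ≤ j then c j else 0) := by
    intro j hj
    rw [Finset.mem_Icc] at hj
    rw [vT_eq_sum π a j hj.2, Finset.mul_sum]
    exact Finset.sum_congr rfl fun x _ => by split_ifs <;> simp
  rw [Finset.sum_congr rfl h1, Finset.sum_comm]
  refine Finset.sum_congr rfl fun x hx => ?_
  simp only [occT, Finset.mem_filter, Finset.mem_Icc] at hx
  rw [← Finset.sum_filter]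
  congr 1
  ext j
  simp only [Finset.mem_filter, Finset.mem_Icc]
  omega

lemma swap_bot (a : A) (c : ℕ → ℝ) :
    ∑ j ∈ Finset.Icc 1 π.m, c j * vB π j a
      = ∑ y ∈ occB π a, ∑ j ∈ Finset.Icc y π.m, c j := by
  have h1 : ∀ j ∈ Finset.Icc 1 π.m, c j * vB π j a
      = ∑ y ∈ occB π a, (if y ≤ j then c j else 0) := by
    intro j hj
    rw [Finset.mem_Icc] at hj
    rw [vB_eq_sum π a j hj.2, Finset.mul_sum]
    exact Finset.sum_congr rfl fun y _ => by split_ifs <;> simp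
  rw [Finset.sum_congr rfl h1, Finset.sum_comm]
  refine Finset.sum_congr rfl fun y hy => ?_
  simp only [occB, Finset.mem_filter, Finset.mem_Icc] at hy
  rw [← Finset.sum_filter]
  congr 1
  ext j
  simp only [Finset.mem_filter, Finset.mem_Icc]
  omega

lemma mem_prefix {n : ℕ} {S : Finset ℕ} (hS : S ⊆ Finset.Icc 1 n)
    (hdc : ∀ x y, 1 ≤ x → x ≤ y → y ∈ S → x ∈ S) {x : ℕ} (hx1 : 1 ≤ x) (hxn : x ≤ n) :
    x ∈ S ↔ x ≤ S.card := by
  constructor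
  · intro hxS
    have hsub : Finset.Icc 1 x ⊆ S := fun z hz => by
      rw [Finset.mem_Icc] at hz; exact hdc z x hz.1 hz.2 hxS
    have := Finset.card_le_card hsub
    simpa [Nat.card_Icc] using this
  · intro hcard
    by_contra hxS
    have hsub : S ⊆ Finset.Icc 1 (x - 1) := fun z hz => by
      have hz1 := hS hz
      rw [Finset.mem_Icc] at hz1 ⊢
      refine ⟨hz1.1, ?_⟩
      by_contra hzx
      exact hxS (hdc x z hx1 (by omega) hz)
    have := Finset.card_le_card hsub
    rw [Nat.card_Icc] at this
    omega

lemma mem_suffix {n : ℕ} {S : Finset ℕ} (hS : S ⊆ Finset.Icc 1 n)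
    (huc : ∀ x y, x ∈ S → x ≤ y → y ≤ n → y ∈ S) {x : ℕ} (hx1 : 1 ≤ x) (hxn : x ≤ n) :
    x ∈ S ↔ n - S.card < x := by
  constructor
  · intro hxS
    have hsub : Finset.Icc x n ⊆ S := fun z hz => by
      rw [Finset.mem_Icc] at hz; exact huc x z hxS hz.1 hz.2
    have := Finset.card_le_card hsub
    rw [Nat.card_Icc] at this
    omega
  · intro hcard
    by_contra hxS
    have hsub : S ⊆ Finset.Icc (x+1) n := fun z hz => by
      have hz1 := hS hz
      rw [Finset.mem_Icc] at hz1 ⊢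
      refine ⟨?_, hz1.2⟩
      by_contra hzx
      exact hxS (huc z x hz (by omega) hxn)
    have := Finset.card_le_card hsub
    rw [Nat.card_Icc] at this
    omega

/-- The key extraction: a monotone dual certificate whose per-letter sums vanish yields a
decomposition; strong irreducibility then forces the certificate to be trivial. -/
lemma extraction [Fintype A] (h : π.StronglyIrreducible) (Λ M : ℕ → ℝ)
    (hΛ : ∀ x y, 1 ≤ x → x ≤ y → y ≤ π.l → Λ y ≤ Λ x)
    (hM : ∀ x y, 1 ≤ x → x ≤ y → y ≤ π.m → M x ≤ M y)
    (hE : ∀ a : A, (∑ x ∈ occT π a, Λ x) + (∑ y ∈ occB π a, M y) = 0)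
    (hne : (∃ x, 1 ≤ x ∧ x ≤ π.l ∧ Λ x ≠ 0) ∨ (∃ y, 1 ≤ y ∧ y ≤ π.m ∧ M y ≠ 0)) :
    False := by
  classical
  set S1 := (Finset.Icc 1 π.l).filter (fun x => 0 < Λ x) with hS1
  set S2 := (Finset.Icc 1 π.l).filter (fun x => Λ x < 0) with hS2
  set S3 := (Finset.Icc 1 π.m).filter (fun y => M y < 0) with hS3
  set S4 := (Finset.Icc 1 π.m).filter (fun y => 0 < M y) with hS4
  -- characterizations
  have cT1 : ∀ x, 1 ≤ x → x ≤ π.l → (0 < Λ x ↔ x ≤ S1.card) := by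
    intro x hx1 hx2
    have hchar := mem_prefix (S := S1) (n := π.l) (Finset.filter_subset _ _)
      (fun x y hx1 hxy hyS => by
        simp only [hS1, Finset.mem_filter, Finset.mem_Icc] at hyS ⊢
        exact ⟨⟨hx1, by omega⟩, lt_of_lt_of_le hyS.2 (hΛ x y hx1 hxy hyS.1.2)⟩) hx1 hx2
    rw [← hchar, hS1, Finset.mem_filter, Finset.mem_Icc]
    tauto
  have cT2 : ∀ x, 1 ≤ x → x ≤ π.l → (Λ x < 0 ↔ π.l - S2.card < x) := by
    intro x hx1 hx2
    have hchar := mem_suffix (S := S2) (n := π.l) (Finset.filter_subset _ _)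
      (fun x y hxS hxy hyl => by
        simp only [hS2, Finset.mem_filter, Finset.mem_Icc] at hxS ⊢
        exact ⟨⟨by omega, hyl⟩, lt_of_le_of_lt (hΛ x y hxS.1.1 hxy hyl) hxS.2⟩) hx1 hx2
    rw [← hchar, hS2, Finset.mem_filter, Finset.mem_Icc]
    tauto
  have cB3 : ∀ y, 1 ≤ y → y ≤ π.m → (M y < 0 ↔ y ≤ S3.card) := by
    intro y hy1 hy2
    have hchar := mem_prefix (S := S3) (n := π.m) (Finset.filter_subset _ _)
      (fun x y hx1 hxy hyS => by
        simp only [hS3, Finset.mem_filter, Finset.mem_Icc] at hyS ⊢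
        exact ⟨⟨hx1, by omega⟩, lt_of_le_of_lt (hM x y hx1 hxy hyS.1.2) hyS.2⟩) hy1 hy2
    rw [← hchar, hS3, Finset.mem_filter, Finset.mem_Icc]
    tauto
  have cB4 : ∀ y, 1 ≤ y → y ≤ π.m → (0 < M y ↔ π.m - S4.card < y) := by
    intro y hy1 hy2
    have hchar := mem_suffix (S := S4) (n := π.m) (Finset.filter_subset _ _)
      (fun x y hxS hxy hyl => by
        simp only [hS4, Finset.mem_filter, Finset.mem_Icc] at hxS ⊢
        exact ⟨⟨by omega, hyl⟩, lt_of_lt_of_le hxS.2 (hM x y hxS.1.1 hxy hyl)⟩) hy1 hy2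
    rw [← hchar, hS4, Finset.mem_filter, Finset.mem_Icc]
    tauto
  -- cardinality bounds
  have h12 : S1.card + S2.card ≤ π.l := by
    have hdisj : Disjoint S1 S2 := by
      rw [Finset.disjoint_left]
      intro x h1 h2
      simp only [hS1, hS2, Finset.mem_filter] at h1 h2
      linarith [h1.2, h2.2]
    have hsub : S1 ∪ S2 ⊆ Finset.Icc 1 π.l :=
      Finset.union_subset (Finset.filter_subset _ _) (Finset.filter_subset _ _)
    have := Finset.card_le_card hsub
    rw [Finset.card_union_of_disjoint hdisj, Nat.card_Icc] at this
    omega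
  have h34 : S3.card + S4.card ≤ π.m := by
    have hdisj : Disjoint S3 S4 := by
      rw [Finset.disjoint_left]
      intro x h1 h2
      simp only [hS3, hS4, Finset.mem_filter] at h1 h2
      linarith [h1.2, h2.2]
    have hsub : S3 ∪ S4 ⊆ Finset.Icc 1 π.m :=
      Finset.union_subset (Finset.filter_subset _ _) (Finset.filter_subset _ _)
    have := Finset.card_le_card hsub
    rw [Finset.card_union_of_disjoint hdisj, Nat.card_Icc] at this
    omega
  -- the four counts per letter
  set tp : A → ℕ := fun a => ((occT π a).filter (fun x => 0 < Λ x)).card with htp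
  set tn : A → ℕ := fun a => ((occT π a).filter (fun x => Λ x < 0)).card with htn
  set bn : A → ℕ := fun a => ((occB π a).filter (fun y => M y < 0)).card with hbn
  set bp : A → ℕ := fun a => ((occB π a).filter (fun y => 0 < M y)).card with hbp
  have keyzero : ∀ (s : Finset ℕ) (f : ℕ → ℝ),
      (s.filter (fun x => 0 < f x)).card = 0 → ∀ x ∈ s, f x ≤ 0 := by
    intro s f hcard x hx
    by_contra hlt
    push_neg at hlt
    have hmem : x ∈ s.filter (fun x => 0 < f x) := Finset.mem_filter.2 ⟨hx, hlt⟩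
    rw [Finset.card_eq_zero] at hcard
    rw [hcard] at hmem
    exact Finset.notMem_empty x hmem
  have keyzero' : ∀ (s : Finset ℕ) (f : ℕ → ℝ),
      (s.filter (fun x => f x < 0)).card = 0 → ∀ x ∈ s, 0 ≤ f x := by
    intro s f hcard x hx
    by_contra hlt
    push_neg at hlt
    have hmem : x ∈ s.filter (fun x => f x < 0) := Finset.mem_filter.2 ⟨hx, hlt⟩
    rw [Finset.card_eq_zero] at hcard
    rw [hcard] at hmem
    exact Finset.notMem_empty x hmem
  have keyex : ∀ (s : Finset ℕ) (f : ℕ → ℝ) (P : ℕ → Prop) [DecidablePred P],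
      (s.filter P).card ≠ 0 → ∃ x ∈ s, P x := by
    intro s f P _ hcard
    rcases Finset.card_ne_zero.1 hcard with ⟨x, hx⟩
    rw [Finset.mem_filter] at hx
    exact ⟨x, hx.1, hx.2⟩
  have quad : ∀ a : A,
      (tp a + bp a = 0 ∧ tn a + bn a = 0) ∨ (tp a + bp a = 1 ∧ tn a + bn a = 1) := by
    intro a
    by_cases hp : tp a = 0 ∧ bp a = 0
    · by_cases hn : tn a = 0 ∧ bn a = 0
      · exact Or.inl ⟨by omega, by omega⟩
      · exfalso
        have hT : ∀ x ∈ occT π a, Λ x ≤ 0 := keyzero _ _ hp.1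
        have hB : ∀ y ∈ occB π a, M y ≤ 0 := keyzero _ _ hp.2
        have hTs : (∑ x ∈ occT π a, Λ x) ≤ 0 := Finset.sum_nonpos hT
        have hBs : (∑ y ∈ occB π a, M y) ≤ 0 := Finset.sum_nonpos hB
        have hstrict : (∑ x ∈ occT π a, Λ x) < 0 ∨ (∑ y ∈ occB π a, M y) < 0 := by
          by_cases htn0 : tn a = 0
          · right
            have hbn0 : bn a ≠ 0 := by tauto
            obtain ⟨y0, hy0, hy0'⟩ := keyex _ M (fun y => M y < 0) hbn0
            calc (∑ y ∈ occB π a, M y) < ∑ y ∈ occB π a, (0:ℝ) :=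
                  Finset.sum_lt_sum hB ⟨y0, hy0, by simpa using hy0'⟩
              _ = 0 := by simp
          · left
            obtain ⟨x0, hx0, hx0'⟩ := keyex _ Λ (fun x => Λ x < 0) htn0
            calc (∑ x ∈ occT π a, Λ x) < ∑ x ∈ occT π a, (0:ℝ) :=
                  Finset.sum_lt_sum hT ⟨x0, hx0, by simpa using hx0'⟩
              _ = 0 := by simp
        have := hE a
        rcases hstrict with hs | hs <;> linarith
    · by_cases hn : tn a = 0 ∧ bn a = 0
      · exfalso
        have hT : ∀ x ∈ occT π a, 0 ≤ Λ x := keyzero' _ _ hn.1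
        have hB : ∀ y ∈ occB π a, 0 ≤ M y := keyzero' _ _ hn.2
        have hTs : 0 ≤ (∑ x ∈ occT π a, Λ x) := Finset.sum_nonneg hT
        have hBs : 0 ≤ (∑ y ∈ occB π a, M y) := Finset.sum_nonneg hB
        have hstrict : 0 < (∑ x ∈ occT π a, Λ x) ∨ 0 < (∑ y ∈ occB π a, M y) := by
          by_cases htp0 : tp a = 0
          · right
            have hbp0 : bp a ≠ 0 := by tauto
            obtain ⟨y0, hy0, hy0'⟩ := keyex _ M (fun y => 0 < M y) hbp0
            calc (0:ℝ) = ∑ y ∈ occB π a, (0:ℝ) := by simp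
              _ < ∑ y ∈ occB π a, M y := Finset.sum_lt_sum hB ⟨y0, hy0, by simpa using hy0'⟩
          · left
            obtain ⟨x0, hx0, hx0'⟩ := keyex _ Λ (fun x => 0 < Λ x) htp0
            calc (0:ℝ) = ∑ x ∈ occT π a, (0:ℝ) := by simp
              _ < ∑ x ∈ occT π a, Λ x := Finset.sum_lt_sum hT ⟨x0, hx0, by simpa using hx0'⟩
        have := hE a
        rcases hstrict with hs | hs <;> linarith
      · -- both a positive and a negative value exist; bound the total by 2
        have htt : tp a + tn a ≤ (occT π a).card := by
          have hdisj : Disjoint ((occT π a).filter (fun x => 0 < Λ x))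
              ((occT π a).filter (fun x => Λ x < 0)) := by
            rw [Finset.disjoint_left]
            intro x h1 h2
            simp only [Finset.mem_filter] at h1 h2
            linarith [h1.2, h2.2]
          have hsub := Finset.union_subset (Finset.filter_subset (fun x => 0 < Λ x) (occT π a))
            (Finset.filter_subset (fun x => Λ x < 0) (occT π a))
          have := Finset.card_le_card hsub
          rwa [Finset.card_union_of_disjoint hdisj] at this
        have hbb : bp a + bn a ≤ (occB π a).card := by
          have hdisj : Disjoint ((occB π a).filter (fun y => 0 < M y))
              ((occB π a).filter (fun y => M y < 0)) := by
            rw [Finset.disjoint_left]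
            intro y h1 h2
            simp only [Finset.mem_filter] at h1 h2
            linarith [h1.2, h2.2]
          have hsub := Finset.union_subset (Finset.filter_subset (fun y => 0 < M y) (occB π a))
            (Finset.filter_subset (fun y => M y < 0) (occB π a))
          have := Finset.card_le_card hsub
          rwa [Finset.card_union_of_disjoint hdisj] at this
        have hco := card_occ π a
        omega
  -- the four corner sets
  set As := Finset.univ.filter (fun a : A => tp a = 1 ∧ bn a = 1) with hAs
  set Bs := Finset.univ.filter (fun a : A => tp a = 1 ∧ tn a = 1) with hBs
  set Cs := Finset.univ.filter (fun a : A => bn a = 1 ∧ bp a = 1) with hCs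
  set Ds := Finset.univ.filter (fun a : A => tn a = 1 ∧ bp a = 1) with hDs
  have F : ∀ a : A,
      tp a = (if a ∈ As then 1 else 0) + (if a ∈ Bs then 1 else 0) ∧
      tn a = (if a ∈ Ds then 1 else 0) + (if a ∈ Bs then 1 else 0) ∧
      bn a = (if a ∈ As then 1 else 0) + (if a ∈ Cs then 1 else 0) ∧
      bp a = (if a ∈ Ds then 1 else 0) + (if a ∈ Cs then 1 else 0) := by
    intro a
    rcases quad a with ⟨h1, h2⟩ | ⟨h1, h2⟩
    · have e1 : tp a = 0 := by omega
      have e2 : bp a = 0 := by omega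
      have e3 : tn a = 0 := by omega
      have e4 : bn a = 0 := by omega
      simp [hAs, hBs, hCs, hDs, e1, e2, e3, e4]
    · have h3 : (tp a = 1 ∧ bp a = 0) ∨ (tp a = 0 ∧ bp a = 1) := by omega
      have h4 : (tn a = 1 ∧ bn a = 0) ∨ (tn a = 0 ∧ bn a = 1) := by omega
      rcases h3 with ⟨e1, e2⟩ | ⟨e1, e2⟩ <;> rcases h4 with ⟨e3, e4⟩ | ⟨e3, e4⟩ <;>
        simp [hAs, hBs, hCs, hDs, e1, e2, e3, e4]
  have hdisjall : Disjoint As Bs ∧ Disjoint As Cs ∧ Disjoint As Ds ∧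
      Disjoint Bs Cs ∧ Disjoint Bs Ds ∧ Disjoint Cs Ds := by
    refine ⟨?_, ?_, ?_, ?_, ?_, ?_⟩ <;>
      (rw [Finset.disjoint_left]
       intro a ha hb
       simp only [hAs, hBs, hCs, hDs, Finset.mem_filter, Finset.mem_univ, true_and] at ha hb
       rcases quad a with ⟨h1, h2⟩ | ⟨h1, h2⟩ <;> omega)
  -- counts of nodup finset values
  have hcount : ∀ (Xs : Finset A) (a : A),
      Multiset.count a Xs.val = if a ∈ Xs then 1 else 0 := by
    intro Xs a
    rw [Multiset.count_eq_of_nodup Xs.nodup]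
    simp only [Finset.mem_val]
  -- the four segment identities
  have seg1 : π.seg 1 S1.card = As.val + Bs.val := by
    refine Multiset.ext.2 fun a => ?_
    rw [Multiset.count_add, count_seg, hcount, hcount]
    have hset : (Finset.Icc 1 S1.card).filter (fun x => π.p x = a)
        = (occT π a).filter (fun x => 0 < Λ x) := by
      ext x
      simp only [Finset.mem_filter, Finset.mem_Icc, occT]
      constructor
      · rintro ⟨⟨hx1, hx2⟩, hx3⟩
        have hxl : x ≤ π.l := by omega
        exact ⟨⟨⟨hx1, hxl⟩, hx3⟩, (cT1 x hx1 hxl).2 hx2⟩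
      · rintro ⟨⟨⟨hx1, hx2⟩, hx3⟩, hx4⟩
        exact ⟨⟨hx1, (cT1 x hx1 hx2).1 hx4⟩, hx3⟩
    rw [hset]
    exact (F a).1
  have seg2 : π.seg (π.l - S2.card + 1) π.l = Ds.val + Bs.val := by
    refine Multiset.ext.2 fun a => ?_
    rw [Multiset.count_add, count_seg, hcount, hcount]
    have hset : (Finset.Icc (π.l - S2.card + 1) π.l).filter (fun x => π.p x = a)
        = (occT π a).filter (fun x => Λ x < 0) := by
      ext x
      simp only [Finset.mem_filter, Finset.mem_Icc, occT]
      constructor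
      · rintro ⟨⟨hx1, hx2⟩, hx3⟩
        have hx1' : 1 ≤ x := by omega
        exact ⟨⟨⟨hx1', hx2⟩, hx3⟩, (cT2 x hx1' hx2).2 (by omega)⟩
      · rintro ⟨⟨⟨hx1, hx2⟩, hx3⟩, hx4⟩
        exact ⟨⟨by have := (cT2 x hx1 hx2).1 hx4; omega, hx2⟩, hx3⟩
    rw [hset]
    exact (F a).2.1
  have seg3 : π.seg (π.l + 1) (π.l + S3.card) = As.val + Cs.val := by
    refine Multiset.ext.2 fun a => ?_
    rw [Multiset.count_add, count_seg, hcount, hcount]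
    rw [card_shift π.l 1 S3.card (fun x => π.p x = a)]
    have hset : (Finset.Icc 1 S3.card).filter (fun y => π.p (π.l + y) = a)
        = (occB π a).filter (fun y => M y < 0) := by
      ext y
      simp only [Finset.mem_filter, Finset.mem_Icc, occB]
      constructor
      · rintro ⟨⟨hy1, hy2⟩, hy3⟩
        have hym : y ≤ π.m := by omega
        exact ⟨⟨⟨hy1, hym⟩, hy3⟩, (cB3 y hy1 hym).2 hy2⟩
      · rintro ⟨⟨⟨hy1, hy2⟩, hy3⟩, hy4⟩
        exact ⟨⟨hy1, (cB3 y hy1 hy2).1 hy4⟩, hy3⟩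
    rw [hset]
    exact (F a).2.2.1
  have seg4 : π.seg (π.l + (π.m - S4.card) + 1) π.size = Ds.val + Cs.val := by
    refine Multiset.ext.2 fun a => ?_
    rw [Multiset.count_add, count_seg, hcount, hcount]
    have h1 : π.l + (π.m - S4.card) + 1 = π.l + (π.m - S4.card + 1) := by omega
    have h2 : π.size = π.l + π.m := rfl
    rw [h1, h2, card_shift π.l (π.m - S4.card + 1) π.m (fun x => π.p x = a)]
    have hset : (Finset.Icc (π.m - S4.card + 1) π.m).filter (fun y => π.p (π.l + y) = a)
        = (occB π a).filter (fun y => 0 < M y) := by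
      ext y
      simp only [Finset.mem_filter, Finset.mem_Icc, occB]
      constructor
      · rintro ⟨⟨hy1, hy2⟩, hy3⟩
        have hy1' : 1 ≤ y := by omega
        exact ⟨⟨⟨hy1', hy2⟩, hy3⟩, (cB4 y hy1' hy2).2 (by omega)⟩
      · rintro ⟨⟨⟨hy1, hy2⟩, hy3⟩, hy4⟩
        exact ⟨⟨by have := (cB4 y hy1 hy2).1 hy4; omega, hy2⟩, hy3⟩
    rw [hset]
    exact (F a).2.2.2
  obtain ⟨z1, z2, z3, z4⟩ := h As Bs Cs Ds S1.card (π.l - S2.card) (π.l + S3.card)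
    (π.l + (π.m - S4.card))
    hdisjall.1 hdisjall.2.1 hdisjall.2.2.1 hdisjall.2.2.2.1 hdisjall.2.2.2.2.1
    hdisjall.2.2.2.2.2
    (by omega) (by omega) (by omega) (by omega)
    (by show π.l + (π.m - S4.card) ≤ π.l + π.m; omega)
    seg1 seg2 seg3 seg4
  rw [seg_eq_zero_iff] at z1 z2 z3 z4
  have hsize : π.size = π.l + π.m := rfl
  rw [hsize] at z4
  have e1 : S1.card = 0 := by omega
  have e2 : S2.card = 0 := by omega
  have e3 : S3.card = 0 := by omega
  have e4 : S4.card = 0 := by omega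
  rcases hne with ⟨x, hx1, hx2, hx3⟩ | ⟨y, hy1, hy2, hy3⟩
  · rcases lt_trichotomy (Λ x) 0 with hlt | heq | hgt
    · have := (cT2 x hx1 hx2).1 hlt; omega
    · exact hx3 heq
    · have := (cT1 x hx1 hx2).1 hgt; omega
  · rcases lt_trichotomy (M y) 0 with hlt | heq | hgt
    · have := (cB3 y hy1 hy2).1 hlt; omega
    · exact hy3 heq
    · have := (cB4 y hy1 hy2).1 hgt; omega

lemma mk_pseudo [Fintype A] (x : A → ℝ)
    (hT : ∀ j, 1 ≤ j → j ≤ π.l → 0 ≤ π.topSumR x j)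
    (hTl : π.topSumR x π.l ≤ 0)
    (hB : ∀ j, 1 ≤ j → j ≤ π.m → π.botSumR x j ≤ 0)
    (hBm : 0 ≤ π.botSumR x π.m) : π.IsPseudoSusp x := by
  have topz : π.topSumR x π.l = 0 := by
    rcases Nat.eq_zero_or_pos π.l with h0 | h0
    · rw [h0, GenPerm.topSumR, show Finset.Icc 1 0 = (∅ : Finset ℕ) from
        Finset.Icc_eq_empty (by omega), Finset.sum_empty]
    · exact le_antisymm hTl (hT _ h0 le_rfl)
  have botz : π.botSumR x π.m = 0 := by
    rcases Nat.eq_zero_or_pos π.m with h0 | h0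
    · rw [h0, GenPerm.botSumR, show Finset.Icc 1 0 = (∅ : Finset ℕ) from
        Finset.Icc_eq_empty (by omega), Finset.sum_empty]
    · exact le_antisymm (hB _ h0 le_rfl) hBm
  exact ⟨hT, hB, topz, botz⟩

lemma exists_pos_top [Fintype A] (h : π.StronglyIrreducible) (k : ℕ) (hk1 : 1 ≤ k)
    (hk2 : k ≤ π.l - 1) :
    ∃ τ : A → ℝ, π.IsPseudoSusp τ ∧ 0 < π.topSumR τ k := by
  by_contra hcon
  push_neg at hcon
  have hl2 : 2 ≤ π.l := by omega
  classical
  set S : Finset (ℕ ⊕ ℕ) :=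
    (insert 0 (Finset.Icc 1 π.l)).disjSum (insert 0 (Finset.Icc 1 π.m)) with hS
  set v : ℕ ⊕ ℕ → A → ℝ := Sum.elim
      (fun j => if j = 0 then -(vT π π.l) else vT π j)
      (fun j => if j = 0 then vB π π.m else -(vB π j)) with hv
  have hfar : ∀ x : A → ℝ, (∀ i ∈ S, 0 ≤ dot (v i) x) → 0 ≤ dot (-(vT π k)) x := by
    intro x hx
    have hT : ∀ j, 1 ≤ j → j ≤ π.l → 0 ≤ π.topSumR x j := by
      intro j hj1 hj2
      have hmem : (Sum.inl j : ℕ ⊕ ℕ) ∈ S := by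
        rw [hS, Finset.inl_mem_disjSum, Finset.mem_insert]
        right; rw [Finset.mem_Icc]; exact ⟨hj1, hj2⟩
      have h0 := hx _ hmem
      rw [hv] at h0
      simp only [Sum.elim_inl] at h0
      rw [if_neg (by omega)] at h0
      rwa [topSumR_eq_dot]
    have hTl : π.topSumR x π.l ≤ 0 := by
      have hmem : (Sum.inl 0 : ℕ ⊕ ℕ) ∈ S := by
        rw [hS, Finset.inl_mem_disjSum]; exact Finset.mem_insert_self _ _
      have h0 := hx _ hmem
      rw [hv] at h0
      simp only [Sum.elim_inl, reduceIte] at h0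
      rw [dot_neg_left] at h0
      rw [topSumR_eq_dot]
      linarith
    have hB : ∀ j, 1 ≤ j → j ≤ π.m → π.botSumR x j ≤ 0 := by
      intro j hj1 hj2
      have hmem : (Sum.inr j : ℕ ⊕ ℕ) ∈ S := by
        rw [hS, Finset.inr_mem_disjSum, Finset.mem_insert]
        right; rw [Finset.mem_Icc]; exact ⟨hj1, hj2⟩
      have h0 := hx _ hmem
      rw [hv] at h0
      simp only [Sum.elim_inr] at h0
      rw [if_neg (by omega), dot_neg_left] at h0
      rw [botSumR_eq_dot]
      linarith
    have hBm : 0 ≤ π.botSumR x π.m := by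
      have hmem : (Sum.inr 0 : ℕ ⊕ ℕ) ∈ S := by
        rw [hS, Finset.inr_mem_disjSum]; exact Finset.mem_insert_self _ _
      have h0 := hx _ hmem
      rw [hv] at h0
      simp only [Sum.elim_inr, reduceIte] at h0
      rwa [botSumR_eq_dot]
    have hps := mk_pseudo π x hT hTl hB hBm
    have := hcon x hps
    rw [topSumR_eq_dot] at this
    rw [dot_neg_left]
    linarith
  obtain ⟨c, hc, hw⟩ := farkas S v (-(vT π k)) hfar
  rw [hS, Finset.sum_disjSum] at hw
  have h0l : (0:ℕ) ∉ Finset.Icc 1 π.l := by simp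
  have h0m : (0:ℕ) ∉ Finset.Icc 1 π.m := by simp
  rw [Finset.sum_insert h0l, Finset.sum_insert h0m] at hw
  have hsum1 : ∑ j ∈ Finset.Icc 1 π.l, c (Sum.inl j) • v (Sum.inl j)
      = ∑ j ∈ Finset.Icc 1 π.l, c (Sum.inl j) • vT π j := by
    refine Finset.sum_congr rfl fun j hj => ?_
    rw [Finset.mem_Icc] at hj
    rw [hv]
    simp only [Sum.elim_inl]
    rw [if_neg (by omega)]
  have hsum2 : ∑ j ∈ Finset.Icc 1 π.m, c (Sum.inr j) • v (Sum.inr j)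
      = ∑ j ∈ Finset.Icc 1 π.m, c (Sum.inr j) • (-(vB π j)) := by
    refine Finset.sum_congr rfl fun j hj => ?_
    rw [Finset.mem_Icc] at hj
    rw [hv]
    simp only [Sum.elim_inr]
    rw [if_neg (by omega)]
  have hv0 : v (Sum.inl 0) = -(vT π π.l) := by rw [hv]; simp
  have hv0' : v (Sum.inr 0) = vB π π.m := by rw [hv]; simp
  rw [hsum1, hsum2, hv0, hv0'] at hw
  have hre : ∀ a : A,
      vT π k a + ((∑ j ∈ Finset.Icc 1 π.l, c (Sum.inl j) * vT π j a)
        - vT π π.l a * c (Sum.inl 0))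
      + (vB π π.m a * c (Sum.inr 0)
        - ∑ j ∈ Finset.Icc 1 π.m, c (Sum.inr j) * vB π j a) = 0 := by
    intro a
    have hfa := congrFun hw a
    simp only [Pi.add_apply, Pi.neg_apply, Pi.smul_apply, smul_eq_mul, Finset.sum_apply,
      mul_neg] at hfa
    rw [Finset.sum_neg_distrib] at hfa
    linarith
  set Λ : ℕ → ℝ := fun x => (if x ≤ k then (1:ℝ) else 0)
      + (∑ j ∈ Finset.Icc x π.l, c (Sum.inl j)) - c (Sum.inl 0) with hΛdef
  set M : ℕ → ℝ := fun y =>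
      c (Sum.inr 0) - ∑ j ∈ Finset.Icc y π.m, c (Sum.inr j) with hMdef
  have hEa : ∀ a : A, (∑ x ∈ occT π a, Λ x) + (∑ y ∈ occB π a, M y) = 0 := by
    intro a
    have e1 : ∑ x ∈ occT π a, Λ x
        = vT π k a + (∑ j ∈ Finset.Icc 1 π.l, c (Sum.inl j) * vT π j a)
          - vT π π.l a * c (Sum.inl 0) := by
      simp only [hΛdef]
      rw [Finset.sum_sub_distrib, Finset.sum_add_distrib]
      rw [← vT_eq_sum π a k (by omega), ← swap_top, Finset.sum_const, nsmul_eq_mul, vT_top]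
    have e2 : ∑ y ∈ occB π a, M y
        = vB π π.m a * c (Sum.inr 0)
          - ∑ j ∈ Finset.Icc 1 π.m, c (Sum.inr j) * vB π j a := by
      simp only [hMdef]
      rw [Finset.sum_sub_distrib, Finset.sum_const, nsmul_eq_mul, vB_bot, ← swap_bot]
    rw [e1, e2]
    linarith [hre a]
  refine extraction π h Λ M ?_ ?_ hEa (Or.inl ?_)
  · intro x y hx1 hxy hyl
    simp only [hΛdef]
    have hsub : Finset.Icc y π.l ⊆ Finset.Icc x π.l := Finset.Icc_subset_Icc_left hxy
    have hle := Finset.sum_le_sum_of_subset_of_nonneg hsub (fun j _ _ => hc (Sum.inl j))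
    have hind : (if y ≤ k then (1:ℝ) else 0) ≤ (if x ≤ k then (1:ℝ) else 0) := by
      by_cases hyk : y ≤ k
      · rw [if_pos hyk, if_pos (by omega)]
      · rw [if_neg hyk]
        split_ifs <;> norm_num
    linarith
  · intro x y hx1 hxy hym
    simp only [hMdef]
    have hsub : Finset.Icc y π.m ⊆ Finset.Icc x π.m := Finset.Icc_subset_Icc_left hxy
    have hle := Finset.sum_le_sum_of_subset_of_nonneg hsub (fun j _ _ => hc (Sum.inr j))
    linarith
  · have hgap : Λ (k+1) + 1 ≤ Λ k := by
      simp only [hΛdef]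
      have hsub : Finset.Icc (k+1) π.l ⊆ Finset.Icc k π.l :=
        Finset.Icc_subset_Icc_left (by omega)
      have hle := Finset.sum_le_sum_of_subset_of_nonneg hsub (fun j _ _ => hc (Sum.inl j))
      rw [if_pos (le_refl k), if_neg (by omega : ¬ k+1 ≤ k)]
      linarith
    rcases eq_or_ne (Λ k) 0 with hk0 | hk0
    · exact ⟨k+1, by omega, by omega, fun h0 => by rw [h0, hk0] at hgap; linarith⟩
    · exact ⟨k, hk1, by omega, hk0⟩

lemma exists_neg_bot [Fintype A] (h : π.StronglyIrreducible) (k : ℕ) (hk1 : 1 ≤ k)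
    (hk2 : k ≤ π.m - 1) :
    ∃ τ : A → ℝ, π.IsPseudoSusp τ ∧ π.botSumR τ k < 0 := by
  by_contra hcon
  push_neg at hcon
  have hm2 : 2 ≤ π.m := by omega
  classical
  set S : Finset (ℕ ⊕ ℕ) :=
    (insert 0 (Finset.Icc 1 π.l)).disjSum (insert 0 (Finset.Icc 1 π.m)) with hS
  set v : ℕ ⊕ ℕ → A → ℝ := Sum.elim
      (fun j => if j = 0 then -(vT π π.l) else vT π j)
      (fun j => if j = 0 then vB π π.m else -(vB π j)) with hv
  have hfar : ∀ x : A → ℝ, (∀ i ∈ S, 0 ≤ dot (v i) x) → 0 ≤ dot (vB π k) x := by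
    intro x hx
    have hT : ∀ j, 1 ≤ j → j ≤ π.l → 0 ≤ π.topSumR x j := by
      intro j hj1 hj2
      have hmem : (Sum.inl j : ℕ ⊕ ℕ) ∈ S := by
        rw [hS, Finset.inl_mem_disjSum, Finset.mem_insert]
        right; rw [Finset.mem_Icc]; exact ⟨hj1, hj2⟩
      have h0 := hx _ hmem
      rw [hv] at h0
      simp only [Sum.elim_inl] at h0
      rw [if_neg (by omega)] at h0
      rwa [topSumR_eq_dot]
    have hTl : π.topSumR x π.l ≤ 0 := by
      have hmem : (Sum.inl 0 : ℕ ⊕ ℕ) ∈ S := by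
        rw [hS, Finset.inl_mem_disjSum]; exact Finset.mem_insert_self _ _
      have h0 := hx _ hmem
      rw [hv] at h0
      simp only [Sum.elim_inl, reduceIte] at h0
      rw [dot_neg_left] at h0
      rw [topSumR_eq_dot]
      linarith
    have hB : ∀ j, 1 ≤ j → j ≤ π.m → π.botSumR x j ≤ 0 := by
      intro j hj1 hj2
      have hmem : (Sum.inr j : ℕ ⊕ ℕ) ∈ S := by
        rw [hS, Finset.inr_mem_disjSum, Finset.mem_insert]
        right; rw [Finset.mem_Icc]; exact ⟨hj1, hj2⟩
      have h0 := hx _ hmem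
      rw [hv] at h0
      simp only [Sum.elim_inr] at h0
      rw [if_neg (by omega), dot_neg_left] at h0
      rw [botSumR_eq_dot]
      linarith
    have hBm : 0 ≤ π.botSumR x π.m := by
      have hmem : (Sum.inr 0 : ℕ ⊕ ℕ) ∈ S := by
        rw [hS, Finset.inr_mem_disjSum]; exact Finset.mem_insert_self _ _
      have h0 := hx _ hmem
      rw [hv] at h0
      simp only [Sum.elim_inr, reduceIte] at h0
      rwa [botSumR_eq_dot]
    have hps := mk_pseudo π x hT hTl hB hBm
    have := hcon x hps
    rwa [botSumR_eq_dot] at this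
  obtain ⟨c, hc, hw⟩ := farkas S v (vB π k) hfar
  rw [hS, Finset.sum_disjSum] at hw
  have h0l : (0:ℕ) ∉ Finset.Icc 1 π.l := by simp
  have h0m : (0:ℕ) ∉ Finset.Icc 1 π.m := by simp
  rw [Finset.sum_insert h0l, Finset.sum_insert h0m] at hw
  have hsum1 : ∑ j ∈ Finset.Icc 1 π.l, c (Sum.inl j) • v (Sum.inl j)
      = ∑ j ∈ Finset.Icc 1 π.l, c (Sum.inl j) • vT π j := by
    refine Finset.sum_congr rfl fun j hj => ?_
    rw [Finset.mem_Icc] at hj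
    rw [hv]
    simp only [Sum.elim_inl]
    rw [if_neg (by omega)]
  have hsum2 : ∑ j ∈ Finset.Icc 1 π.m, c (Sum.inr j) • v (Sum.inr j)
      = ∑ j ∈ Finset.Icc 1 π.m, c (Sum.inr j) • (-(vB π j)) := by
    refine Finset.sum_congr rfl fun j hj => ?_
    rw [Finset.mem_Icc] at hj
    rw [hv]
    simp only [Sum.elim_inr]
    rw [if_neg (by omega)]
  have hv0 : v (Sum.inl 0) = -(vT π π.l) := by rw [hv]; simp
  have hv0' : v (Sum.inr 0) = vB π π.m := by rw [hv]; simp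
  rw [hsum1, hsum2, hv0, hv0'] at hw
  have hre : ∀ a : A,
      -(vB π k a) + ((∑ j ∈ Finset.Icc 1 π.l, c (Sum.inl j) * vT π j a)
        - vT π π.l a * c (Sum.inl 0))
      + (vB π π.m a * c (Sum.inr 0)
        - ∑ j ∈ Finset.Icc 1 π.m, c (Sum.inr j) * vB π j a) = 0 := by
    intro a
    have hfa := congrFun hw a
    simp only [Pi.add_apply, Pi.neg_apply, Pi.smul_apply, smul_eq_mul, Finset.sum_apply,
      mul_neg] at hfa
    rw [Finset.sum_neg_distrib] at hfa
    linarith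
  set Λ : ℕ → ℝ := fun x =>
      (∑ j ∈ Finset.Icc x π.l, c (Sum.inl j)) - c (Sum.inl 0) with hΛdef
  set M : ℕ → ℝ := fun y =>
      c (Sum.inr 0) - ∑ j ∈ Finset.Icc y π.m, c (Sum.inr j)
        - (if y ≤ k then (1:ℝ) else 0) with hMdef
  have hEa : ∀ a : A, (∑ x ∈ occT π a, Λ x) + (∑ y ∈ occB π a, M y) = 0 := by
    intro a
    have e1 : ∑ x ∈ occT π a, Λ x
        = (∑ j ∈ Finset.Icc 1 π.l, c (Sum.inl j) * vT π j a)
          - vT π π.l a * c (Sum.inl 0) := by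
      simp only [hΛdef]
      rw [Finset.sum_sub_distrib]
      rw [← swap_top, Finset.sum_const, nsmul_eq_mul, vT_top]
    have e2 : ∑ y ∈ occB π a, M y
        = vB π π.m a * c (Sum.inr 0)
          - (∑ j ∈ Finset.Icc 1 π.m, c (Sum.inr j) * vB π j a) - vB π k a := by
      simp only [hMdef]
      rw [Finset.sum_sub_distrib, Finset.sum_sub_distrib, Finset.sum_const, nsmul_eq_mul,
        vB_bot, ← swap_bot, ← vB_eq_sum π a k (by omega)]
    rw [e1, e2]
    linarith [hre a]
  refine extraction π h Λ M ?_ ?_ hEa (Or.inr ?_)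
  · intro x y hx1 hxy hyl
    simp only [hΛdef]
    have hsub : Finset.Icc y π.l ⊆ Finset.Icc x π.l := Finset.Icc_subset_Icc_left hxy
    have hle := Finset.sum_le_sum_of_subset_of_nonneg hsub (fun j _ _ => hc (Sum.inl j))
    linarith
  · intro x y hx1 hxy hym
    simp only [hMdef]
    have hsub : Finset.Icc y π.m ⊆ Finset.Icc x π.m := Finset.Icc_subset_Icc_left hxy
    have hle := Finset.sum_le_sum_of_subset_of_nonneg hsub (fun j _ _ => hc (Sum.inr j))
    have hind : (if y ≤ k then (1:ℝ) else 0) ≤ (if x ≤ k then (1:ℝ) else 0) := by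
      by_cases hyk : y ≤ k
      · rw [if_pos hyk, if_pos (by omega)]
      · rw [if_neg hyk]
        split_ifs <;> norm_num
    linarith
  · have hgap : M k + 1 ≤ M (k+1) := by
      simp only [hMdef]
      have hsub : Finset.Icc (k+1) π.m ⊆ Finset.Icc k π.m :=
        Finset.Icc_subset_Icc_left (by omega)
      have hle := Finset.sum_le_sum_of_subset_of_nonneg hsub (fun j _ _ => hc (Sum.inr j))
      rw [if_pos (le_refl k), if_neg (by omega : ¬ k+1 ≤ k)]
      linarith
    rcases eq_or_ne (M k) 0 with hk0 | hk0
    · exact ⟨k+1, by omega, by omega, fun h0 => by rw [h0, hk0] at hgap; linarith⟩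
    · exact ⟨k, hk1, by omega, hk0⟩

lemma topSumR_add (f g : A → ℝ) (j : ℕ) :
    π.topSumR (f + g) j = π.topSumR f j + π.topSumR g j := by
  unfold GenPerm.topSumR
  simp [Finset.sum_add_distrib]

lemma botSumR_add (f g : A → ℝ) (j : ℕ) :
    π.botSumR (f + g) j = π.botSumR f j + π.botSumR g j := by
  unfold GenPerm.botSumR
  simp [Finset.sum_add_distrib]

lemma topSumR_sum {ι : Type*} (s : Finset ι) (f : ι → A → ℝ) (j : ℕ) :
    π.topSumR (∑ i ∈ s, f i) j = ∑ i ∈ s, π.topSumR (f i) j := by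
  unfold GenPerm.topSumR
  simp only [Finset.sum_apply]
  exact Finset.sum_comm

lemma botSumR_sum {ι : Type*} (s : Finset ι) (f : ι → A → ℝ) (j : ℕ) :
    π.botSumR (∑ i ∈ s, f i) j = ∑ i ∈ s, π.botSumR (f i) j := by
  unfold GenPerm.botSumR
  simp only [Finset.sum_apply]
  exact Finset.sum_comm
end GPAux
/-- Every strongly irreducible generalized permutation admits a strict
pseudo-suspension. -/
theorem stronglyIrreducible_exists_strictPseudoSusp {A : Type*} [DecidableEq A]
    (π : GenPerm A) (h : π.StronglyIrreducible) :
    ∃ τ : A → ℝ, π.IsStrictPseudoSusp τ := by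
  classical
  have hfin : Finite A := by
    have hsurj : ∀ a : A, ∃ x : ℕ, x ∈ Finset.Icc 1 (π.l + π.m) ∧ π.p x = a := by
      intro a
      have hd := π.double a
      have hne : ((Finset.Icc 1 (π.l + π.m)).filter (fun i => π.p i = a)).Nonempty := by
        rw [← Finset.card_pos, hd]; omega
      obtain ⟨x, hx⟩ := hne
      rw [Finset.mem_filter] at hx
      exact ⟨x, hx.1, hx.2⟩
    exact Finite.of_surjective (fun x : (Finset.Icc 1 (π.l + π.m) : Finset ℕ) => π.p x)
      (fun a => by obtain ⟨x, hx1, hx2⟩ := hsurj a; exact ⟨⟨x, hx1⟩, hx2⟩)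
  have hft : Fintype A := Fintype.ofFinite A
  choose τt hτt using fun (k : {k // k ∈ Finset.Icc 1 (π.l - 1)}) =>
    GPAux.exists_pos_top π h k.1 (Finset.mem_Icc.1 k.2).1 (Finset.mem_Icc.1 k.2).2
  choose τb hτb using fun (k : {k // k ∈ Finset.Icc 1 (π.m - 1)}) =>
    GPAux.exists_neg_bot π h k.1 (Finset.mem_Icc.1 k.2).1 (Finset.mem_Icc.1 k.2).2
  set τ : A → ℝ := (∑ k ∈ (Finset.Icc 1 (π.l - 1)).attach, τt k)
      + (∑ k ∈ (Finset.Icc 1 (π.m - 1)).attach, τb k) with hτ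
  have htopτ : ∀ j, π.topSumR τ j
      = (∑ k ∈ (Finset.Icc 1 (π.l - 1)).attach, π.topSumR (τt k) j)
        + (∑ k ∈ (Finset.Icc 1 (π.m - 1)).attach, π.topSumR (τb k) j) := by
    intro j
    rw [hτ, GPAux.topSumR_add, GPAux.topSumR_sum, GPAux.topSumR_sum]
  have hbotτ : ∀ j, π.botSumR τ j
      = (∑ k ∈ (Finset.Icc 1 (π.l - 1)).attach, π.botSumR (τt k) j)
        + (∑ k ∈ (Finset.Icc 1 (π.m - 1)).attach, π.botSumR (τb k) j) := by
    intro j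
    rw [hτ, GPAux.botSumR_add, GPAux.botSumR_sum, GPAux.botSumR_sum]
  refine ⟨τ, ⟨⟨?_, ?_, ?_, ?_⟩, ?_, ?_⟩⟩
  · intro j hj1 hjl
    rw [htopτ]
    have h1 : 0 ≤ ∑ k ∈ (Finset.Icc 1 (π.l - 1)).attach, π.topSumR (τt k) j :=
      Finset.sum_nonneg fun k _ => (hτt k).1.1 j hj1 hjl
    have h2 : 0 ≤ ∑ k ∈ (Finset.Icc 1 (π.m - 1)).attach, π.topSumR (τb k) j :=
      Finset.sum_nonneg fun k _ => (hτb k).1.1 j hj1 hjl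
    linarith
  · intro j hj1 hjm
    rw [hbotτ]
    have h1 : ∑ k ∈ (Finset.Icc 1 (π.l - 1)).attach, π.botSumR (τt k) j ≤ 0 :=
      Finset.sum_nonpos fun k _ => (hτt k).1.2.1 j hj1 hjm
    have h2 : ∑ k ∈ (Finset.Icc 1 (π.m - 1)).attach, π.botSumR (τb k) j ≤ 0 :=
      Finset.sum_nonpos fun k _ => (hτb k).1.2.1 j hj1 hjm
    linarith
  · rw [htopτ]
    have h1 : ∑ k ∈ (Finset.Icc 1 (π.l - 1)).attach, π.topSumR (τt k) π.l = 0 :=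
      Finset.sum_eq_zero fun k _ => (hτt k).1.2.2.1
    have h2 : ∑ k ∈ (Finset.Icc 1 (π.m - 1)).attach, π.topSumR (τb k) π.l = 0 :=
      Finset.sum_eq_zero fun k _ => (hτb k).1.2.2.1
    rw [h1, h2, add_zero]
  · rw [hbotτ]
    have h1 : ∑ k ∈ (Finset.Icc 1 (π.l - 1)).attach, π.botSumR (τt k) π.m = 0 :=
      Finset.sum_eq_zero fun k _ => (hτt k).1.2.2.2
    have h2 : ∑ k ∈ (Finset.Icc 1 (π.m - 1)).attach, π.botSumR (τb k) π.m = 0 :=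
      Finset.sum_eq_zero fun k _ => (hτb k).1.2.2.2
    rw [h1, h2, add_zero]
  · intro j hj1 hjl
    rw [htopτ]
    have hjmem : j ∈ Finset.Icc 1 (π.l - 1) := Finset.mem_Icc.2 ⟨hj1, hjl⟩
    have hjl' : j ≤ π.l := by omega
    have h1 : 0 < ∑ k ∈ (Finset.Icc 1 (π.l - 1)).attach, π.topSumR (τt k) j :=
      Finset.sum_pos' (fun k _ => (hτt k).1.1 j hj1 hjl')
        ⟨⟨j, hjmem⟩, Finset.mem_attach _ _, (hτt ⟨j, hjmem⟩).2⟩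
    have h2 : 0 ≤ ∑ k ∈ (Finset.Icc 1 (π.m - 1)).attach, π.topSumR (τb k) j :=
      Finset.sum_nonneg fun k _ => (hτb k).1.1 j hj1 hjl'
    linarith
  · intro j hj1 hjm
    rw [hbotτ]
    have hjmem : j ∈ Finset.Icc 1 (π.m - 1) := Finset.mem_Icc.2 ⟨hj1, hjm⟩
    have hjm' : j ≤ π.m := by omega
    have h1 : ∑ k ∈ (Finset.Icc 1 (π.l - 1)).attach, π.botSumR (τt k) j ≤ 0 :=
      Finset.sum_nonpos fun k _ => (hτt k).1.2.1 j hj1 hjm'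
    have h2 : ∑ k ∈ (Finset.Icc 1 (π.m - 1)).attach, π.botSumR (τb k) j < 0 := by
      have := Finset.sum_lt_sum (s := (Finset.Icc 1 (π.m - 1)).attach)
        (f := fun k => π.botSumR (τb k) j) (g := fun _ => (0:ℝ))
        (fun k _ => (hτb k).1.2.1 j hj1 hjm')
        ⟨⟨j, hjmem⟩, Finset.mem_attach _ _, (hτb ⟨j, hjmem⟩).2⟩
      simpa using this
    linarith
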